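/- Let $F \in K[x_1,\dots,x_n]$ be homogeneous of degree $d$, and let $L \subseteq \mathbb{A}^n$ be a linear subspace defined by the vanishing of linearly independent linear forms $z_1,\dots,z_e$. If $\mathrm{mult}_p F \ge d$ for every point $p \in L$, then $F$ lies in the subalgebra $K[z_1,\dots,z_e]$, i.e., $F$ is a homogeneous polynomial of degree $d$ in $z_1,\dots,z_e$. -/

import Mathlib

open MvPolynomial

/-! ### Auxiliary lemmas -/

section Aux

theorem StmtAux.degree_add' {σ : Type*} (u v : σ →₀ ℕ) :
    (u + v).degree = u.degree + v.degree := by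
  simp [Finsupp.degree_eq_weight_one, map_add]

theorem StmtAux.degree_single' {σ : Type*} (a : σ) (b : ℕ) :
    (Finsupp.single a b).degree = b := by
  simp only [Finsupp.degree_eq_weight_one, Finsupp.weight_apply]
  rw [Finsupp.sum_single_index] <;> simp

theorem StmtAux.degree_eq_of_mem_support {R : Type*} [CommRing R] {σ : Type*} {d : ℕ}
    {F : MvPolynomial σ R} (hF : F.IsHomogeneous d) {u : σ →₀ ℕ} (hu : coeff u F ≠ 0) :
    u.degree = d := by
  rw [Finsupp.degree_eq_weight_one]; exact hF hu

theorem StmtAux.scale_monomial {R : Type*} [CommRing R] {σ : Type*} (τ : R) (u : σ →₀ ℕ)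
    (c : R) :
    bind₁ (fun i : σ => C τ * X i) (monomial u c) = monomial u (τ ^ u.degree * c) := by
  rw [bind₁_monomial]
  simp only [mul_pow, ← C_pow, Finset.prod_mul_distrib, ← map_prod]
  rw [monomial_eq, Finsupp.prod, Finset.prod_pow_eq_pow_sum, map_mul, Finsupp.degree_apply]
  ring

theorem StmtAux.coeff_scale {R : Type*} [CommRing R] {σ : Type*} (τ : R) (G : MvPolynomial σ R)
    (m : σ →₀ ℕ) : coeff m (bind₁ (fun i : σ => C τ * X i) G) = τ ^ m.degree * coeff m G := by
  classical
  conv_lhs => rw [G.as_sum]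
  rw [map_sum, coeff_sum]
  simp only [StmtAux.scale_monomial, coeff_monomial]
  rw [Finset.sum_ite_eq' G.support m (fun x => τ ^ x.degree * coeff x G)]
  by_cases h : m ∈ G.support
  · simp [h]
  · simp [h, notMem_support_iff.1 h]

/-- Upgrade invariance under the translation by `v` to invariance under translation
by `τ • v`, for homogeneous polynomials over a domain. -/
theorem StmtAux.translation_scale {R : Type*} [CommRing R] [IsDomain R] {σ : Type*} {d : ℕ}
    {F : MvPolynomial σ R} (hF : F.IsHomogeneous d) {τ : R} (hτ : τ ≠ 0) {v : σ → R}
    (hv : bind₁ (fun i : σ => X i + C (v i)) F = F) :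
    bind₁ (fun i : σ => X i + C (τ * v i)) F = F := by
  have hS : ∀ G : MvPolynomial σ R, G.IsHomogeneous d →
      bind₁ (fun i : σ => C τ * X i) G = C (τ ^ d) * G := by
    intro G hG
    apply MvPolynomial.ext
    intro m
    rw [StmtAux.coeff_scale, coeff_C_mul]
    by_cases h : coeff m G = 0
    · simp [h]
    · rw [StmtAux.degree_eq_of_mem_support hG h]
  have e1 : bind₁ (fun i : σ => C τ * X i) (bind₁ (fun i : σ => X i + C (τ * v i)) F)
      = bind₁ (fun i : σ => C τ * X i + C (τ * v i)) F := by
    rw [bind₁_bind₁]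
    refine congrFun (congrArg (fun f => ⇑(bind₁ f)) (funext fun i => ?_)) F
    simp only [map_add, bind₁_X_right, bind₁_C_right]
  have e2 : bind₁ (fun i : σ => X i + C (v i)) (bind₁ (fun i : σ => C τ * X i) F)
      = bind₁ (fun i : σ => C τ * X i + C (τ * v i)) F := by
    rw [bind₁_bind₁]
    refine congrFun (congrArg (fun f => ⇑(bind₁ f)) (funext fun i => ?_)) F
    simp only [map_mul, map_add, bind₁_X_right, bind₁_C_right, C_mul]
    ring
  have key : bind₁ (fun i : σ => C τ * X i) (bind₁ (fun i : σ => X i + C (τ * v i)) F)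
      = bind₁ (fun i : σ => C τ * X i) F := by
    rw [e1, ← e2, hS F hF, map_mul, bind₁_C_right, hv]
  apply MvPolynomial.ext
  intro m
  have h3 := congrArg (coeff m) key
  rw [StmtAux.coeff_scale, StmtAux.coeff_scale] at h3
  exact mul_left_cancel₀ (pow_ne_zero _ hτ) h3

theorem StmtAux.pow_split {R : Type*} [CommRing R] [Nontrivial R] {σ : Type*} (a : σ) (b : R) :
    ∀ k : ℕ, 0 < k → ∃ E : MvPolynomial σ R,
      (X a + C b) ^ k = X a ^ k + E ∧ E.totalDegree < k := by
  intro k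
  induction k with
  | zero => intro h; omega
  | succ k ih =>
    intro _
    rcases Nat.eq_zero_or_pos k with hk | hk
    · subst hk
      exact ⟨C b, by simp, by simp [totalDegree_C]⟩
    · obtain ⟨E, hE, hdeg⟩ := ih hk
      refine ⟨E * X a + E * C b + X a ^ k * C b, ?_, ?_⟩
      · rw [pow_succ, hE]; ring
      · have h1 : (E * X a).totalDegree < k + 1 :=
          lt_of_le_of_lt (totalDegree_mul E (X a))
            (by rw [totalDegree_X]; omega)
        have h2 : (E * C b).totalDegree < k + 1 :=
          lt_of_le_of_lt (totalDegree_mul E (C b))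
            (by rw [totalDegree_C]; omega)
        have h3 : (X a ^ k * C b : MvPolynomial σ R).totalDegree < k + 1 := by
          refine lt_of_le_of_lt (totalDegree_mul _ (C b)) ?_
          rw [totalDegree_C]
          have := totalDegree_pow (X a : MvPolynomial σ R) k
          rw [totalDegree_X] at this
          omega
        have hle : (E * X a + E * C b + X a ^ k * C b).totalDegree
            ≤ max (max (E * X a).totalDegree (E * C b).totalDegree)
              (X a ^ k * C b).totalDegree :=
          le_trans (totalDegree_add _ _) (max_le_max (totalDegree_add _ _) le_rfl)
        refine lt_of_le_of_lt hle ?_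
        rw [Nat.max_lt, Nat.max_lt]
        exact ⟨⟨h1, h2⟩, h3⟩

theorem StmtAux.smallness_cases {R : Type*} [CommRing R] {σ : Type*} {E : MvPolynomial σ R}
    {s : ℕ} (h : ∀ m ∈ E.support, m.degree < s) : E = 0 ∨ E.totalDegree < s := by
  by_cases hE : E = 0
  · exact Or.inl hE
  · right
    obtain ⟨m, hm⟩ := Finset.nonempty_iff_ne_empty.2 (fun hc => hE (support_eq_empty.1 hc))
    have hs : 0 < s := lt_of_le_of_lt (Nat.zero_le _) (h m hm)
    rw [totalDegree, Finset.sup_lt_iff hs]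
    exact fun b hb => h b hb

theorem StmtAux.prod_split {R : Type*} [CommRing R] [Nontrivial R] {σ : Type*} (p : σ → R)
    (u : σ →₀ ℕ) : ∃ E : MvPolynomial σ R,
      (u.prod fun i k => (X i + C (p i)) ^ k) = monomial u 1 + E ∧
      ∀ m ∈ E.support, m.degree < u.degree := by
  classical
  induction u using Finsupp.induction with
  | zero => exact ⟨0, by simp, by simp⟩
  | single_add a b f ha hb ih =>
    obtain ⟨E₂, hE₂, hsmall₂⟩ := ih
    obtain ⟨E₁, hE₁, hdeg₁⟩ := StmtAux.pow_split a (p a) b (Nat.pos_of_ne_zero hb)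
    have hprod : ((Finsupp.single a b + f).prod fun i k => (X i + C (p i)) ^ k)
        = (X a + C (p a)) ^ b * (f.prod fun i k => (X i + C (p i)) ^ k) := by
      rw [Finsupp.prod_add_index' (fun i => pow_zero _) (fun i m n => pow_add _ m n)]
      congr 1
      exact Finsupp.prod_single_index (pow_zero _)
    have hdeg : (Finsupp.single a b + f).degree = b + f.degree := by
      rw [StmtAux.degree_add', StmtAux.degree_single']
    refine ⟨X a ^ b * E₂ + E₁ * monomial f 1 + E₁ * E₂, ?_, ?_⟩
    · rw [hprod, hE₂, hE₁]
      have hmm : (monomial (Finsupp.single a b) (1:R)) * monomial f 1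
          = monomial (Finsupp.single a b + f) 1 := by
        rw [monomial_mul, one_mul]
      rw [← hmm, ← X_pow_eq_monomial]
      ring
    · intro m hm
      rw [hdeg]
      have hb1 : 0 < b := Nat.pos_of_ne_zero hb
      rcases StmtAux.smallness_cases hsmall₂ with h2 | h2
      · subst h2
        simp only [mul_zero, add_zero, zero_add] at hm ⊢
        have hle : m.degree ≤ (E₁ * monomial f 1).totalDegree := le_totalDegree hm
        have hmon : (monomial f (1:R)).totalDegree ≤ f.degree := totalDegree_monomial_le _ _
        have := totalDegree_mul E₁ (monomial f (1:R))
        omega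
      · have hb2 : m.degree ≤ (X a ^ b * E₂ + E₁ * monomial f 1 + E₁ * E₂).totalDegree :=
          le_totalDegree hm
        have hXa : (X a ^ b : MvPolynomial σ R).totalDegree ≤ b := by
          have := totalDegree_pow (X a : MvPolynomial σ R) b
          rw [totalDegree_X] at this; omega
        have hmon : (monomial f (1:R)).totalDegree ≤ f.degree := totalDegree_monomial_le _ _
        have t1 := totalDegree_mul (X a ^ b : MvPolynomial σ R) E₂
        have t2 := totalDegree_mul E₁ (monomial f (1:R))
        have t3 := totalDegree_mul E₁ E₂
        have hh := le_trans hb2 (le_trans (totalDegree_add _ _)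
          (max_le_max (totalDegree_add _ _) le_rfl))
        rcases le_max_iff.1 hh with hh1 | hh1
        · rcases le_max_iff.1 hh1 with hh2 | hh2 <;> omega
        · omega

theorem StmtAux.degree_one_single {σ : Type*} (u : σ →₀ ℕ) (h : u.degree = 1) :
    ∃ i, u = Finsupp.single i 1 := by
  classical
  have hcard : u.support.card = 1 := by
    have h1 : u.support.card ≤ ∑ i ∈ u.support, u i := by
      rw [Finset.card_eq_sum_ones]
      exact Finset.sum_le_sum fun i hi => Nat.one_le_iff_ne_zero.2 (Finsupp.mem_support_iff.1 hi)
    have h2 : u.support.Nonempty := by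
      by_contra hc
      rw [Finset.not_nonempty_iff_eq_empty] at hc
      have : u = 0 := Finsupp.support_eq_empty.1 hc
      rw [this] at h; simp at h
    have h3 := Finset.card_pos.2 h2
    have h4 : ∑ i ∈ u.support, u i = u.degree := rfl
    omega
  obtain ⟨a, b, hb, hu⟩ := Finsupp.card_support_eq_one'.1 hcard
  refine ⟨a, ?_⟩
  have hd : u.degree = b := by rw [hu]; exact StmtAux.degree_single' a b
  rw [hu, ← hd, h]

theorem StmtAux.homog_one_rep {K : Type*} [Field K] {n : ℕ} (q : MvPolynomial (Fin n) K)
    (hq : q.IsHomogeneous 1) :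
    q = ∑ i : Fin n, C (coeff (Finsupp.single i 1) q) * X i := by
  classical
  apply MvPolynomial.ext
  intro m
  have hX : ∀ (i : Fin n) (a : K), C a * (X i : MvPolynomial (Fin n) K)
      = monomial (Finsupp.single i 1) a := fun i a => by
    rw [X, C_mul_monomial, mul_one]
  rw [coeff_sum]
  simp only [hX, coeff_monomial]
  by_cases hm : ∃ i, m = Finsupp.single i 1
  · obtain ⟨i₀, rfl⟩ := hm
    rw [Finset.sum_eq_single i₀]
    · simp
    · intro i _ hne
      have : ¬ (Finsupp.single i 1 = Finsupp.single i₀ 1) := by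
        intro hc
        exact hne ((Finsupp.single_left_inj (one_ne_zero)).1 hc)
      simp [this]
    · intro h; exact absurd (Finset.mem_univ i₀) h
  · have h0 : coeff m q = 0 := by
      by_contra hc
      exact hm (by
        obtain ⟨i, hi⟩ := StmtAux.degree_one_single m (StmtAux.degree_eq_of_mem_support hq hc)
        exact ⟨i, hi⟩)
    rw [h0]
    refine (Finset.sum_eq_zero ?_).symm
    intro i _
    have : ¬ (Finsupp.single i 1 = m) := fun hc => hm ⟨i, hc.symm⟩
    simp [this]

theorem StmtAux.right_inverse_exists {K : Type*} [Field K] {n e : ℕ} (w : Fin e → (Fin n → K))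
    (hw : LinearIndependent K w) :
    ∃ N : Fin n → Fin e → K, ∀ j j', ∑ i, w j i * N i j' = if j = j' then 1 else 0 := by
  classical
  let S := Submodule.span K (Set.range w)
  let b : Module.Basis (Fin e) K S := Module.Basis.span hw
  have hext : ∀ j' : Fin e, ∃ g : (Fin n → K) →ₗ[K] K, g.comp S.subtype = b.coord j' :=
    fun j' => LinearMap.exists_extend (b.coord j')
  choose g hg using hext
  refine ⟨fun i j' => g j' (fun k => if i = k then 1 else 0), ?_⟩
  intro j j'
  have hwj : (w j : Fin n → K)
      = ∑ i, w j i • ((fun k => if i = k then 1 else 0) : Fin n → K) :=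
    pi_eq_sum_univ (w j)
  have hmem : w j ∈ S := Submodule.subset_span (Set.mem_range_self j)
  have hb : b j = ⟨w j, hmem⟩ := by
    apply Subtype.ext
    rw [Module.Basis.span_apply]
  calc ∑ i, w j i * g j' (fun k => if i = k then 1 else 0)
      = g j' (∑ i, w j i • ((fun k => if i = k then 1 else 0) : Fin n → K)) := by
        rw [map_sum]
        exact Finset.sum_congr rfl fun i _ => by rw [map_smul]; rfl
    _ = g j' (w j) := by rw [← hwj]
    _ = b.coord j' ⟨w j, hmem⟩ := by
        have := congrArg (fun (f : S →ₗ[K] K) => f ⟨w j, hmem⟩) (hg j')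
        simpa using this
    _ = if j = j' then 1 else 0 := by
        rw [← hb, Module.Basis.coord_apply, Module.Basis.repr_self]
        rw [Finsupp.single_apply]

/-- Composing two translations concatenates them. -/
theorem StmtAux.trans_comp {R : Type*} [CommRing R] {σ : Type*} (b c : σ → R)
    (G : MvPolynomial σ R) :
    bind₁ (fun i : σ => X i + C (b i)) (bind₁ (fun i : σ => X i + C (c i)) G)
      = bind₁ (fun i : σ => X i + C (b i + c i)) G := by
  rw [bind₁_bind₁]
  refine congrFun (congrArg (fun f => ⇑(bind₁ f)) (funext fun i => ?_)) G
  simp only [map_add, bind₁_X_right, bind₁_C_right]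
  ring

end Aux

/-- The multiplicity of `F` at `p` is at least `d`: every monomial appearing in
the Taylor expansion of `F` at `p` (i.e., in `F(X + p)`) has total degree `≥ d`. -/
def multGE {K : Type*} [CommRing K] {σ : Type*}
    (F : MvPolynomial σ K) (p : σ → K) (d : ℕ) : Prop :=
  ∀ u ∈ ((bind₁ fun i : σ => (X i : MvPolynomial σ K) + C (p i)) F).support,
    d ≤ u.sum fun _ e => e

theorem StmtAux.translation_inv {K : Type*} [Field K] {σ : Type*} {d : ℕ}
    {F : MvPolynomial σ K} (hhom : F.IsHomogeneous d) {p : σ → K}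
    (hm : multGE F p d) :
    bind₁ (fun i : σ => X i + C (p i)) F = F := by
  classical
  choose E hE hsmall using StmtAux.prod_split p (R := K) (σ := σ)
  have hexp : bind₁ (fun i : σ => X i + C (p i)) F
      = F + ∑ u ∈ F.support, C (coeff u F) * E u := by
    conv_lhs => rw [F.as_sum]
    rw [map_sum]
    have hcong : ∀ u ∈ F.support,
        (bind₁ (fun i : σ => X i + C (p i))) (monomial u (coeff u F))
        = monomial u (coeff u F) + C (coeff u F) * E u := by
      intro u _
      have h2 : (∏ i ∈ u.support, (X i + C (p i)) ^ u i) = monomial u 1 + E u := hE u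
      rw [bind₁_monomial, h2, mul_add, C_mul_monomial, mul_one]
    rw [Finset.sum_congr rfl hcong, Finset.sum_add_distrib, ← F.as_sum]
  have hErr : (∑ u ∈ F.support, C (coeff u F) * E u) = 0 := by
    by_contra hne
    obtain ⟨m, hmErr⟩ := Finset.nonempty_iff_ne_empty.2
      (fun hc => hne (support_eq_empty.1 hc))
    have hmd : m.degree < d := by
      have := MvPolynomial.support_sum hmErr
      obtain ⟨u, hu, hmu⟩ := Finset.mem_biUnion.1 this
      have hsub : (C (coeff u F) * E u).support ⊆ (E u).support := by
        rw [← smul_eq_C_mul]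
        exact MvPolynomial.support_smul
      have := hsmall u m (hsub hmu)
      rwa [StmtAux.degree_eq_of_mem_support hhom (mem_support_iff.1 hu)] at this
    have hcoeffF : coeff m F = 0 := by
      by_contra hc
      exact absurd (StmtAux.degree_eq_of_mem_support hhom hc) (by omega)
    have hcoeffT : coeff m (bind₁ (fun i : σ => X i + C (p i)) F) ≠ 0 := by
      rw [hexp, coeff_add, hcoeffF, zero_add]
      exact mem_support_iff.1 hmErr
    have := hm m (mem_support_iff.2 hcoeffT)
    have hms : (m.sum fun _ e => e) = m.degree := rfl
    omega
  rw [hexp, hErr, add_zero]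

/-- Key structural step in the proof of Theorem 3.5: if `F` is homogeneous of
degree `d` and has multiplicity `≥ d` at every point of the linear subspace
`L = {z₁ = ⋯ = z_e = 0}` cut out by linearly independent linear forms, then `F`
is a polynomial in `z₁,…,z_e`. -/
theorem stmt9 (K : Type*) [Field K] (n e d : ℕ)
    (F : MvPolynomial (Fin n) K) (hhom : F.IsHomogeneous d)
    (z : Fin e → MvPolynomial (Fin n) K)
    (hz : ∀ j, (z j).IsHomogeneous 1)
    (hind : LinearIndependent K z)
    (hmult : ∀ p : Fin n → K, (∀ j, eval p (z j) = 0) → multGE F p d) :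
    F ∈ Algebra.adjoin K (Set.range z) := by
  classical
  set m : Fin e → Fin n → K := fun j i => coeff (Finsupp.single i 1) (z j) with hm
  have hrep : ∀ j, z j = ∑ i, C (m j i) * X i := fun j =>
    StmtAux.homog_one_rep (z j) (hz j)
  -- linear independence of the coefficient rows
  have hmind : LinearIndependent K m := by
    rw [Fintype.linearIndependent_iff]
    intro c hc
    have hz0 : ∑ j, c j • z j = 0 := by
      have hc' : ∀ i, ∑ j, c j * m j i = 0 := by
        intro i
        have := congrFun hc i
        simpa [Finset.sum_apply] using this
      calc ∑ j, c j • z j = ∑ j, ∑ i, C (c j * m j i) * X i := by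
            refine Finset.sum_congr rfl fun j _ => ?_
            rw [hrep j, Finset.smul_sum]
            refine Finset.sum_congr rfl fun i _ => ?_
            rw [smul_eq_C_mul, ← mul_assoc, ← C_mul]
        _ = ∑ i, ∑ j, C (c j * m j i) * X i := Finset.sum_comm
        _ = 0 := by
            refine Finset.sum_eq_zero fun i _ => ?_
            rw [← Finset.sum_mul, ← map_sum, hc' i]
            simp
    exact fun j => (Fintype.linearIndependent_iff.1 hind) c hz0 j
  obtain ⟨N, hN⟩ := StmtAux.right_inverse_exists m hmind
  -- the matrix Q = N*M − id, whose columns lie in L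
  set Q : Fin n → Fin n → K :=
    fun i k => (∑ j, N i j * m j k) - (if i = k then 1 else 0) with hQ
  have hQL : ∀ j k, ∑ i, m j i * Q i k = 0 := by
    intro j k
    have hexpand : ∀ i, m j i * Q i k
        = (∑ j', m j i * (N i j' * m j' k)) - m j i * (if i = k then 1 else 0) := by
      intro i
      rw [hQ]
      rw [mul_sub, Finset.mul_sum]
    rw [Finset.sum_congr rfl fun i _ => hexpand i, Finset.sum_sub_distrib]
    have h1 : ∑ i, ∑ j', m j i * (N i j' * m j' k)
        = ∑ j', (∑ i, m j i * N i j') * m j' k := by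
      rw [Finset.sum_comm]
      refine Finset.sum_congr rfl fun j' _ => ?_
      rw [Finset.sum_mul]
      refine Finset.sum_congr rfl fun i _ => by ring
    have h2 : ∑ i, m j i * (if i = k then 1 else 0) = m j k := by
      rw [Finset.sum_congr rfl (fun i _ => by
        rw [mul_ite, mul_one, mul_zero])]
      exact Finset.sum_ite_eq' Finset.univ k (fun i => m j i) |>.trans (by simp)
    rw [h1, h2]
    have h3 : ∀ j', (∑ i, m j i * N i j') * m j' k
        = (if j = j' then 1 else 0) * m j' k := fun j' => by rw [hN j j']
    rw [Finset.sum_congr rfl fun j' _ => h3 j']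
    simp [Finset.sum_ite_eq]
  -- columns of Q lie in the zero locus of the z's
  have hqmem : ∀ k j, eval (fun i => Q i k) (z j) = 0 := by
    intro k j
    rw [hrep j]
    rw [map_sum]
    simpa using hQL j k
  -- base translation invariance
  have hTq : ∀ k, bind₁ (fun i => X i + C (Q i k)) F = F := fun k =>
    StmtAux.translation_inv hhom (hmult _ (hqmem k))
  -- lift everything to coefficients in R₀ = K[X]
  have hF' : (map (C : K →+* MvPolynomial (Fin n) K) F).IsHomogeneous d := hhom.map C
  set F' : MvPolynomial (Fin n) (MvPolynomial (Fin n) K) := map C F with hF'def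
  have hTq' : ∀ k, bind₁ (fun i => X i + C ((C (Q i k) : MvPolynomial (Fin n) K))) F' = F' := by
    intro k
    have := congrArg (map (C : K →+* MvPolynomial (Fin n) K)) (hTq k)
    rw [map_bind₁] at this
    simpa using this
  have hscaled : ∀ k, bind₁
      (fun i => X i + C ((X k : MvPolynomial (Fin n) K) * C (Q i k))) F' = F' := fun k =>
    StmtAux.translation_scale hF' (X_ne_zero k) (hTq' k)
  -- Finset induction: simultaneous formal translation
  have hInv : ∀ s : Finset (Fin n), bind₁
      (fun i => X i + C (∑ k ∈ s, (X k : MvPolynomial (Fin n) K) * C (Q i k))) F' = F' := by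
    intro s
    induction s using Finset.induction_on with
    | empty => simp [bind₁_X_left]
    | @insert a s hna ih =>
      have hstep := StmtAux.trans_comp
        (fun i => ∑ k ∈ s, (X k : MvPolynomial (Fin n) K) * C (Q i k))
        (fun i => (X a : MvPolynomial (Fin n) K) * C (Q i a)) F'
      rw [hscaled a, ih] at hstep
      have hvec : (fun i => (X i : MvPolynomial (Fin n) (MvPolynomial (Fin n) K))
            + C (∑ k ∈ insert a s, (X k : MvPolynomial (Fin n) K) * C (Q i k)))
          = fun i => X i + C ((∑ k ∈ s, (X k : MvPolynomial (Fin n) K) * C (Q i k))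
            + (X a : MvPolynomial (Fin n) K) * C (Q i a)) := by
        funext i
        rw [Finset.sum_insert hna, add_comm ((X a : MvPolynomial (Fin n) K) * C (Q i a))]
      rw [hvec, ← hstep]
  -- collapse the two polynomial rings
  have hstar : bind₁ (fun i => X i
      + ∑ k, (X k : MvPolynomial (Fin n) K) * C (Q i k)) F = F := by
    have h0 := congrArg (eval₂Hom (RingHom.id (MvPolynomial (Fin n) K)) X) (hInv Finset.univ)
    rw [eval₂Hom_bind₁] at h0
    rw [hF'def, eval₂Hom_map_hom, eval₂Hom_map_hom, RingHom.id_comp] at h0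
    have hLHS : (fun i => eval₂Hom (RingHom.id (MvPolynomial (Fin n) K)) X
          ((X i : MvPolynomial (Fin n) (MvPolynomial (Fin n) K))
            + C (∑ k, (X k : MvPolynomial (Fin n) K) * C (Q i k))))
        = fun i => (X i : MvPolynomial (Fin n) K)
            + ∑ k, (X k : MvPolynomial (Fin n) K) * C (Q i k) := by
      funext i
      simp only [map_add, eval₂Hom_X', eval₂Hom_C, map_sum, map_mul, RingHom.id_apply]
    rw [hLHS] at h0
    have hid : eval₂Hom (C : K →+* MvPolynomial (Fin n) K) X F = F := eval₂_eta F
    rw [hid] at h0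
    rw [eval₂Hom_C_eq_bind₁] at h0
    exact h0
  -- define the witness polynomial G in e variables
  set g : Fin n → MvPolynomial (Fin e) K := fun i => ∑ j, C (N i j) * X j with hg
  have hfinal : bind₁ z (bind₁ g F) = F := by
    rw [bind₁_bind₁]
    have hvec : (fun i => bind₁ z (g i))
        = fun i => (X i : MvPolynomial (Fin n) K)
            + ∑ k, (X k : MvPolynomial (Fin n) K) * C (Q i k) := by
      funext i
      have h1 : bind₁ z (g i) = ∑ j, C (N i j) * z j := by
        rw [hg]
        rw [map_sum]
        refine Finset.sum_congr rfl fun j _ => ?_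
        rw [map_mul, bind₁_C_right, bind₁_X_right]
      rw [h1]
      have h2 : ∑ j, C (N i j) * z j
          = ∑ k, C (∑ j, N i j * m j k) * X k := by
        calc ∑ j, C (N i j) * z j
            = ∑ j, ∑ k, C (N i j * m j k) * X k := by
              refine Finset.sum_congr rfl fun j _ => ?_
              rw [hrep j, Finset.mul_sum]
              refine Finset.sum_congr rfl fun k _ => by rw [← mul_assoc, ← C_mul]
          _ = ∑ k, ∑ j, C (N i j * m j k) * X k := Finset.sum_comm
          _ = ∑ k, C (∑ j, N i j * m j k) * X k := by
              refine Finset.sum_congr rfl fun k _ => ?_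
              rw [← Finset.sum_mul, ← map_sum]
      rw [h2]
      have h3 : ∀ k, (∑ j, N i j * m j k) = (if i = k then 1 else 0) + Q i k := by
        intro k
        rw [hQ]
        ring
      rw [Finset.sum_congr rfl fun k _ => by rw [h3 k]]
      have h4 : ∑ k, C ((if i = k then (1:K) else 0) + Q i k) * X k
          = (∑ k, C (if i = k then (1:K) else 0) * X k)
            + ∑ k, C (Q i k) * X k := by
        rw [← Finset.sum_add_distrib]
        refine Finset.sum_congr rfl fun k _ => by rw [map_add, add_mul]
      rw [h4]
      congr 1
      · have h5 : ∀ k, C (if i = k then (1:K) else 0) * (X k : MvPolynomial (Fin n) K)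
            = if i = k then X k else 0 := by
          intro k
          by_cases hik : i = k <;> simp [hik]
        rw [Finset.sum_congr rfl fun k _ => h5 k]
        simp
      · exact Finset.sum_congr rfl fun k _ => by rw [mul_comm]
    rw [hvec]
    exact hstar
  rw [Algebra.adjoin_range_eq_range_aeval]
  exact ⟨bind₁ g F, by rw [aeval_eq_bind₁]; exact hfinal⟩
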